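/- Let d ≥ 2. For every 0 < β < β_c, every pair of sets S, Λ with 0 ∈ S ⊆ Λ ⊆ ℤ^d, and every x ∈ Λ, one has the reversed Simon–Lieb bound G_β^Λ(0,x) ≥ G_β^S(0,x) + Σ_{y∈S, z∈Λ∖S, y∼z} G_β^S(0,y)·β·G_β^Λ(z,x) − λ·Σ_{u∈S} E_β^{S,Λ}(u)·G_β^Λ(u,x). -/

import Mathlib

open scoped ENNReal

namespace WSAW

/-- Vertices of the hypercubic lattice `ℤ^d`. -/
abbrev V (d : ℕ) := Fin d → ℤ

/-- Nearest-neighbour relation on `ℤ^d`. -/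
def Adj {d : ℕ} (x y : V d) : Prop := (∑ i, (x i - y i).natAbs) = 1

/-- A finite nearest-neighbour path in `ℤ^d` with `len` edges. -/
structure SAWPath (d : ℕ) where
  len : ℕ
  f : Fin (len + 1) → V d
  adj : ∀ i : Fin len, Adj (f i.castSucc) (f i.succ)

/-- The weight `ρ(γ) = ∏_{0 ≤ s < t ≤ |γ|} (1 - λ 1[γ(s) = γ(t)])`. -/
noncomputable def weight {d : ℕ} (lam : ℝ) (γ : SAWPath d) : ℝ :=
  ∏ s : Fin (γ.len + 1), ∏ t : Fin (γ.len + 1),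
    if s < t ∧ γ.f s = γ.f t then 1 - lam else 1

/-- Paths from `x` to `y` staying inside `Λ`. -/
def PathsIn {d : ℕ} (Λ : Set (V d)) (x y : V d) : Set (SAWPath d) :=
  {γ | γ.f 0 = x ∧ γ.f (Fin.last γ.len) = y ∧ ∀ i, γ.f i ∈ Λ}

/-- The two-point function `G_β^Λ(x,y)`, valued in `ℝ≥0∞`. -/
noncomputable def G {d : ℕ} (lam β : ℝ) (Λ : Set (V d)) (x y : V d) : ℝ≥0∞ :=
  ∑' γ : PathsIn Λ x y, ENNReal.ofReal (β ^ (γ.1.len) * weight lam γ.1)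

/-- The susceptibility `χ(β)`. -/
noncomputable def chi (d : ℕ) (lam β : ℝ) : ℝ≥0∞ :=
  ∑' x : V d, G lam β Set.univ 0 x

/-- The critical point `β_c`. -/
noncomputable def betaC (d : ℕ) (lam : ℝ) : ℝ :=
  sSup {β : ℝ | 0 ≤ β ∧ chi d lam β < ⊤}

/-- `φ_β(S) = Σ_{y ∈ S, z ∉ S, y ∼ z} β G_β^S(0,y)`. -/
noncomputable def phi (d : ℕ) (lam β : ℝ) (S : Set (V d)) : ℝ≥0∞ :=
  ∑' p : {p : V d × V d // p.1 ∈ S ∧ p.2 ∉ S ∧ Adj p.1 p.2},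
    ENNReal.ofReal β * G lam β S 0 p.1.1

/-- The `ℓ^∞` norm of a vertex. -/
def normInf {d : ℕ} (x : V d) : ℕ := Finset.univ.sup fun i => (x i).natAbs

/-- The box `Λ_n = {x : |x| ≤ n}`. -/
def box (d : ℕ) (n : ℕ) : Set (V d) := {x | normInf x ≤ n}

/-- The length `L_β(ε) = inf {k ≥ 1 : φ_β(Λ_k) ≤ 1 - ε}` (equal to `∞` if no such `k`). -/
noncomputable def Leps (d : ℕ) (lam β ε : ℝ) : ℝ≥0∞ :=
  sInf {L : ℝ≥0∞ | ∃ k : ℕ, L = k ∧ 1 ≤ k ∧ phi d lam β (box d k) ≤ ENNReal.ofReal (1 - ε)}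

/-- The sharp length `L_β = inf {k ≥ 1 : φ_β(Λ_k) ≤ e^{-2}}` (equal to `∞` if no such `k`). -/
noncomputable def Lsharp (d : ℕ) (lam β : ℝ) : ℝ≥0∞ :=
  Leps d lam β (1 - Real.exp (-2))

/-- The first coordinate `x₁` of a vertex. -/
def firstCoord {d : ℕ} (x : V d) : ℤ := if h : 0 < d then x ⟨0, h⟩ else 0

/-- The half-space `ℍ = ℤ_{≥0} × ℤ^{d-1}`. -/
def halfspace (d : ℕ) : Set (V d) := {x | 0 ≤ firstCoord x}

/-- The shifted half-space `ℍ_m = -m e₁ + ℍ = {x : x₁ ≥ -m}`. -/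
def Hset (d : ℕ) (m : ℤ) : Set (V d) := {x | -m ≤ firstCoord x}

/-- The boundary `∂S`: vertices of `S` with a neighbour outside `S`. -/
def bdry {d : ℕ} (S : Set (V d)) : Set (V d) := {y | y ∈ S ∧ ∃ z, z ∉ S ∧ Adj y z}

/-- Condition `(ℓ¹_β)`. -/
def ellOne (d : ℕ) (lam β : ℝ) : Prop :=
  ∀ n : ℕ, phi d lam β (Hset d n) < ENNReal.ofReal (1 + 1 / (2 * d))

/-- Condition `(ℓ∞_β)`. -/
def ellInf (d : ℕ) (C lam β : ℝ) : Prop :=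
  ∀ n : ℕ, ∀ x ∈ bdry (Hset d n),
    G lam β (Hset d n) 0 x < ENNReal.ofReal (C / ((max 1 n : ℕ) : ℝ) ^ (d - 1))

/-- `β*(C,λ)`. -/
noncomputable def betaStar (d : ℕ) (C lam : ℝ) : ℝ :=
  sSup {β : ℝ | β ∈ Set.Icc 0 (betaC d lam) ∧ ellOne d lam β ∧ ellInf d C lam β}

/-- `E_β^{S,Λ}(u)`. -/
noncomputable def Efun (d : ℕ) (lam β : ℝ) (S Λ : Set (V d)) (u : V d) : ℝ≥0∞ :=
  ∑' p : {p : V d × V d // p.1 ∈ S ∧ p.2 ∈ Λ \ S ∧ Adj p.1 p.2},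
    G lam β S 0 u * G lam β S u p.1.1 * ENNReal.ofReal β * G lam β Λ p.1.2 u

/-- The error amplitude `E_β^{S,Λ} = Σ_{u ∈ S} E_β^{S,Λ}(u)`. -/
noncomputable def Eamp (d : ℕ) (lam β : ℝ) (S Λ : Set (V d)) : ℝ≥0∞ :=
  ∑' u : S, Efun d lam β S Λ u

/-- The set of blocks `ℬ`. -/
def Blocks (d : ℕ) : Set (Set (V d)) :=
  {B | ∃ a b : V d, (∀ i, a i ≤ 0) ∧ (∀ i, 0 ≤ b i) ∧
    B = {x | ∀ i, a i ≤ x i ∧ x i ≤ b i}}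



section Helpers
variable {d : ℕ}

namespace SAWPath
variable {d : ℕ}

def eval (γ : SAWPath d) (i : ℕ) : V d :=
  if h : i < γ.len + 1 then γ.f ⟨i, h⟩ else 0

lemma eval_lt (γ : SAWPath d) {i : ℕ} (h : i < γ.len + 1) : γ.eval i = γ.f ⟨i, h⟩ := dif_pos h

lemma eval_fin (γ : SAWPath d) (i : Fin (γ.len + 1)) : γ.eval i = γ.f i := by
  rw [eval_lt γ i.isLt]

lemma eval_ge (γ : SAWPath d) {i : ℕ} (h : γ.len + 1 ≤ i) : γ.eval i = 0 := dif_neg (by omega)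

lemma ext_eval {γ γ' : SAWPath d} (hl : γ.len = γ'.len) (hf : ∀ i : ℕ, γ.eval i = γ'.eval i) :
    γ = γ' := by
  obtain ⟨n, f, a⟩ := γ
  obtain ⟨n', f', a'⟩ := γ'
  simp only at hl
  subst hl
  have hf' : f = f' := by
    funext i
    have h := hf i
    rw [eval_lt _ i.isLt, eval_lt _ i.isLt] at h
    simpa using h
  subst hf'
  rfl

def take (γ : SAWPath d) (s : ℕ) (hs : s ≤ γ.len) : SAWPath d where
  len := s
  f i := γ.f ⟨i, by have := i.isLt; omega⟩
  adj i := by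
    have hi := i.isLt
    convert γ.adj ⟨i, by omega⟩ using 2 <;> exact Fin.ext (by simp)

def drop (γ : SAWPath d) (s : ℕ) (hs : s ≤ γ.len) : SAWPath d where
  len := γ.len - s
  f i := γ.f ⟨s + i, by have := i.isLt; omega⟩
  adj i := by
    have hi := i.isLt
    convert γ.adj ⟨s + i, by omega⟩ using 2 <;> exact Fin.ext (by simp <;> omega)

def glue (γ₁ γ₂ : SAWPath d) (h : Adj (γ₁.f (Fin.last γ₁.len)) (γ₂.f 0)) : SAWPath d where
  len := γ₁.len + 1 + γ₂.len
  f i := if hi : (i : ℕ) ≤ γ₁.len then γ₁.f ⟨i, by omega⟩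
    else γ₂.f ⟨i - (γ₁.len + 1), by have := i.isLt; omega⟩
  adj i := by
    have hi := i.isLt
    rcases lt_trichotomy (i : ℕ) γ₁.len with h1 | h1 | h1
    · rw [dif_pos (by simp; omega), dif_pos (by simp; omega)]
      convert γ₁.adj ⟨i, by omega⟩ using 2 <;> exact Fin.ext (by simp)
    · rw [dif_pos (by simp; omega), dif_neg (by simp; omega)]
      convert h using 2 <;> exact Fin.ext (by simp [Fin.last]; omega)
    · rw [dif_neg (by simp; omega), dif_neg (by simp; omega)]
      convert γ₂.adj ⟨(i : ℕ) - (γ₁.len + 1), by omega⟩ using 2 <;>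
        exact Fin.ext (by simp <;> omega)

@[simp] lemma len_take (γ : SAWPath d) (s hs) : (γ.take s hs).len = s := rfl
@[simp] lemma len_drop (γ : SAWPath d) (s hs) : (γ.drop s hs).len = γ.len - s := rfl
@[simp] lemma len_glue (γ₁ γ₂ : SAWPath d) (h) : (glue γ₁ γ₂ h).len = γ₁.len + 1 + γ₂.len := rfl

lemma eval_take (γ : SAWPath d) (s hs) {i : ℕ} (hi : i ≤ s) :
    (γ.take s hs).eval i = γ.eval i := by
  rw [eval_lt _ (by simp; omega), eval_lt _ (by omega)]; rfl

lemma eval_drop (γ : SAWPath d) (s hs) {i : ℕ} (hi : i ≤ γ.len - s) :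
    (γ.drop s hs).eval i = γ.eval (s + i) := by
  rw [eval_lt _ (by simp; omega), eval_lt _ (by omega)]; rfl

lemma eval_glue_left (γ₁ γ₂ : SAWPath d) (h) {i : ℕ} (hi : i ≤ γ₁.len) :
    (glue γ₁ γ₂ h).eval i = γ₁.eval i := by
  rw [eval_lt _ (by simp; omega), eval_lt _ (by omega)]
  exact dif_pos hi

lemma eval_glue_right (γ₁ γ₂ : SAWPath d) (h) {i : ℕ} (hi : i ≤ γ₂.len) :
    (glue γ₁ γ₂ h).eval (γ₁.len + 1 + i) = γ₂.eval i := by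
  rw [eval_lt _ (by simp; omega), eval_lt _ (by omega)]
  exact (dif_neg (by simp; omega)).trans (congrArg γ₂.f (Fin.ext (by simp)))


lemma eval_zero (γ : SAWPath d) : γ.eval 0 = γ.f 0 := by
  rw [eval_lt _ (by omega)]; exact congrArg γ.f (Fin.ext (by simp))

lemma eval_len (γ : SAWPath d) : γ.eval γ.len = γ.f (Fin.last γ.len) := by
  rw [eval_lt _ (by omega)]; rfl

lemma glue_inj_of {γ₁ γ₂ γ₁' γ₂' : SAWPath d} {h h'}
    (hlen : γ₁.len = γ₁'.len) (heq : glue γ₁ γ₂ h = glue γ₁' γ₂' h') :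
    γ₁ = γ₁' ∧ γ₂ = γ₂' := by
  have hL : γ₁.len + 1 + γ₂.len = γ₁'.len + 1 + γ₂'.len := by
    have := congrArg SAWPath.len heq; simpa using this
  have hev : ∀ i, (glue γ₁ γ₂ h).eval i = (glue γ₁' γ₂' h').eval i :=
    fun i => congrArg (fun γ => eval γ i) heq
  constructor
  · refine ext_eval hlen (fun i => ?_)
    by_cases hi : i ≤ γ₁.len
    · rw [← eval_glue_left γ₁ γ₂ h hi, ← eval_glue_left γ₁' γ₂' h' (hlen ▸ hi), hev]
    · rw [eval_ge _ (by omega), eval_ge _ (by omega)]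
  · refine ext_eval (by omega) (fun i => ?_)
    by_cases hi : i ≤ γ₂.len
    · have hthis := hev (γ₁.len + 1 + i)
      rw [eval_glue_right γ₁ γ₂ h hi] at hthis
      rw [hlen] at hthis
      rw [eval_glue_right γ₁' γ₂' h' (by omega)] at hthis
      exact hthis
    · rw [eval_ge _ (by omega), eval_ge _ (by omega)]

lemma take_drop_inj {γ γ' : SAWPath d} {s s' : ℕ} {hs : s ≤ γ.len} {hs' : s' ≤ γ'.len}
    (h1 : γ.take s hs = γ'.take s' hs') (h2 : γ.drop s hs = γ'.drop s' hs') :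
    s = s' ∧ γ = γ' := by
  have hss : s = s' := congrArg SAWPath.len h1
  subst hss
  have hlen : γ.len = γ'.len := by
    have := congrArg SAWPath.len h2
    simp only [len_drop] at this
    omega
  refine ⟨rfl, ext_eval hlen (fun i => ?_)⟩
  by_cases hi : i ≤ s
  · rw [← eval_take γ s hs hi, ← eval_take γ' s hs' hi, h1]
  · by_cases hi2 : i ≤ γ.len
    · have h3 : i - s ≤ γ.len - s := by omega
      have h4 := congrArg (fun δ => eval δ (i - s)) h2
      rw [eval_drop γ s hs h3, eval_drop γ' s hs' (by omega)] at h4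
      have hsi : s + (i - s) = i := by omega
      rwa [hsi] at h4
    · rw [eval_ge _ (by omega), eval_ge _ (by omega)]

lemma mem_pathsIn_iff {Λ : Set (V d)} {a b : V d} {γ : SAWPath d} :
    γ ∈ PathsIn Λ a b ↔
      γ.eval 0 = a ∧ γ.eval γ.len = b ∧ ∀ i, i ≤ γ.len → γ.eval i ∈ Λ := by
  rw [PathsIn, Set.mem_setOf_eq, eval_zero, eval_len]
  constructor
  · rintro ⟨h0, h1, h2⟩
    exact ⟨h0, h1, fun i hi => by rw [eval_lt _ (by omega)]; exact h2 _⟩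
  · rintro ⟨h0, h1, h2⟩
    refine ⟨h0, h1, fun i => ?_⟩
    have h3 := h2 i.val (by have := i.isLt; omega)
    rwa [eval_fin] at h3

lemma take_mem {Λ : Set (V d)} {a b : V d} {γ : SAWPath d} (hγ : γ ∈ PathsIn Λ a b)
    (s : ℕ) (hs : s ≤ γ.len) : γ.take s hs ∈ PathsIn Λ a (γ.eval s) := by
  rw [mem_pathsIn_iff] at hγ ⊢
  refine ⟨by rw [eval_take γ s hs (by omega)]; exact hγ.1,
    by rw [len_take, eval_take γ s hs le_rfl], fun i hi => ?_⟩
  rw [len_take] at hi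
  rw [eval_take γ s hs hi]
  exact hγ.2.2 i (by omega)

lemma drop_mem {Λ : Set (V d)} {a b : V d} {γ : SAWPath d} (hγ : γ ∈ PathsIn Λ a b)
    (s : ℕ) (hs : s ≤ γ.len) : γ.drop s hs ∈ PathsIn Λ (γ.eval s) b := by
  rw [mem_pathsIn_iff] at hγ ⊢
  refine ⟨by rw [eval_drop γ s hs (by omega)]; congr 1, ?_, fun i hi => ?_⟩
  · rw [len_drop, eval_drop γ s hs le_rfl]
    have : s + (γ.len - s) = γ.len := by omega
    rw [this]; exact hγ.2.1
  · rw [len_drop] at hi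
    rw [eval_drop γ s hs hi]
    exact hγ.2.2 _ (by omega)

lemma glue_mem {S Λ : Set (V d)} {a y z b : V d} {γ₁ γ₂ : SAWPath d} (hS : S ⊆ Λ)
    (h₁ : γ₁ ∈ PathsIn S a y) (h₂ : γ₂ ∈ PathsIn Λ z b) (h) :
    glue γ₁ γ₂ h ∈ PathsIn Λ a b := by
  rw [mem_pathsIn_iff] at h₁ h₂ ⊢
  refine ⟨by rw [eval_glue_left _ _ _ (by omega)]; exact h₁.1, ?_, fun i hi => ?_⟩
  · rw [len_glue, eval_glue_right _ _ _ le_rfl]; exact h₂.2.1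
  · rw [len_glue] at hi
    by_cases h3 : i ≤ γ₁.len
    · rw [eval_glue_left _ _ _ h3]; exact hS (h₁.2.2 i h3)
    · have h4 : i = γ₁.len + 1 + (i - (γ₁.len + 1)) := by omega
      rw [h4, eval_glue_right _ _ _ (by omega)]
      exact h₂.2.2 _ (by omega)

lemma eval_glue_exit (γ₁ γ₂ : SAWPath d) (h) :
    (glue γ₁ γ₂ h).eval (γ₁.len + 1) = γ₂.eval 0 := by
  have := eval_glue_right γ₁ γ₂ h (i := 0) (by omega)
  simpa using this


@[simp] lemma take_f (γ : SAWPath d) (s hs) (i : Fin (s + 1)) :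
    (γ.take s hs).f i = γ.f ⟨i, by have := i.isLt; omega⟩ := rfl

@[simp] lemma drop_f (γ : SAWPath d) (s hs) (i : Fin (γ.len - s + 1)) :
    (γ.drop s hs).f i = γ.f ⟨s + i, by have := i.isLt; omega⟩ := rfl

end SAWPath

section Weight
open SAWPath

noncomputable def pf (lam : ℝ) {n : ℕ} (f : Fin (n + 1) → V d) (p : Fin (n + 1) × Fin (n + 1)) : ℝ :=
  if p.1 < p.2 ∧ f p.1 = f p.2 then 1 - lam else 1

variable {lam : ℝ}

lemma pf_nonneg (h1 : lam ≤ 1) {n : ℕ} (f : Fin (n + 1) → V d) (p) : 0 ≤ pf lam f p := by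
  rw [pf]; split <;> linarith

lemma pf_le_one (h0 : 0 ≤ lam) {n : ℕ} (f : Fin (n + 1) → V d) (p) : pf lam f p ≤ 1 := by
  rw [pf]; split <;> linarith

lemma weight_eq_prod (lam : ℝ) (γ : SAWPath d) :
    weight lam γ = ∏ p : Fin (γ.len + 1) × Fin (γ.len + 1), pf lam γ.f p :=
  (Fintype.prod_prod_type' fun s t => pf lam γ.f (s, t)).symm

lemma weight_nonneg (h1 : lam ≤ 1) (γ : SAWPath d) : 0 ≤ weight lam γ := by
  rw [weight_eq_prod]
  exact Finset.prod_nonneg fun p _ => pf_nonneg h1 _ p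

lemma weight_le_one (h0 : 0 ≤ lam) (h1 : lam ≤ 1) (γ : SAWPath d) : weight lam γ ≤ 1 := by
  rw [weight_eq_prod]
  exact Finset.prod_le_one (fun p _ => pf_nonneg h1 _ p) (fun p _ => pf_le_one h0 _ p)

lemma prod_subset_le {ι : Type*} {A B : Finset ι} (h : A ⊆ B) {g : ι → ℝ}
    (h0 : ∀ i, 0 ≤ g i) (h1 : ∀ i, g i ≤ 1) : ∏ i ∈ B, g i ≤ ∏ i ∈ A, g i := by
  classical
  rw [← Finset.prod_sdiff h]
  have hle : ∏ i ∈ B \ A, g i ≤ 1 := Finset.prod_le_one (fun i _ => h0 i) (fun i _ => h1 i)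
  have hnn : 0 ≤ ∏ i ∈ A, g i := Finset.prod_nonneg fun i _ => h0 i
  nlinarith [Finset.prod_nonneg (s := B \ A) (fun i (_ : i ∈ B \ A) => h0 i)]

lemma one_sub_prod_le {ι : Type*} (A : Finset ι) (g : ι → ℝ) (h0 : ∀ i, 0 ≤ g i)
    (h1 : ∀ i, g i ≤ 1) : 1 - ∏ i ∈ A, g i ≤ ∑ i ∈ A, (1 - g i) := by
  classical
  induction A using Finset.cons_induction with
  | empty => simp
  | cons a s ha ih =>
    rw [Finset.prod_cons, Finset.sum_cons]
    have hp : 0 ≤ ∏ i ∈ s, g i := Finset.prod_nonneg fun i _ => h0 i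
    have hp1 : ∏ i ∈ s, g i ≤ 1 := Finset.prod_le_one (fun i _ => h0 i) fun i _ => h1 i
    nlinarith [h0 a, h1 a, ih]

lemma weight_take_prod (lam : ℝ) (γ : SAWPath d) (s : ℕ) (hs : s ≤ γ.len) :
    weight lam (γ.take s hs) =
      ∏ p ∈ Finset.univ.filter
        (fun p : Fin (γ.len + 1) × Fin (γ.len + 1) => (p.1 : ℕ) ≤ s ∧ (p.2 : ℕ) ≤ s),
        pf lam γ.f p := by
  rw [weight_eq_prod]
  refine Finset.prod_nbij'
    (fun q : Fin (s + 1) × Fin (s + 1) =>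
      ((⟨q.1, by have := q.1.isLt; omega⟩ : Fin (γ.len + 1)),
       (⟨q.2, by have := q.2.isLt; omega⟩ : Fin (γ.len + 1))))
    (fun p => ((⟨min p.1 s, by omega⟩ : Fin (s + 1)), (⟨min p.2 s, by omega⟩ : Fin (s + 1))))
    (fun q _ => by
      have h1 := q.1.isLt; have h2 := q.2.isLt
      simp only [len_take] at h1 h2
      simp
      omega)
    (fun p hp => Finset.mem_univ _)
    (fun q _ => by
      have h1 := q.1.isLt; have h2 := q.2.isLt
      simp only [len_take] at h1 h2
      refine Prod.ext (Fin.ext ?_) (Fin.ext ?_) <;> simp <;> omega)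
    (fun p hp => by
      simp only [Finset.mem_filter] at hp
      refine Prod.ext (Fin.ext ?_) (Fin.ext ?_) <;> simp <;> omega)
    (fun q _ => by
      simp only [pf, take_f, Fin.lt_def]; rfl)

lemma weight_drop_prod (lam : ℝ) (γ : SAWPath d) (s : ℕ) (hs : s ≤ γ.len) :
    weight lam (γ.drop s hs) =
      ∏ p ∈ Finset.univ.filter
        (fun p : Fin (γ.len + 1) × Fin (γ.len + 1) => s ≤ (p.1 : ℕ) ∧ s ≤ (p.2 : ℕ)),
        pf lam γ.f p := by
  rw [weight_eq_prod]
  refine Finset.prod_nbij'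
    (fun q : Fin (γ.len - s + 1) × Fin (γ.len - s + 1) =>
      ((⟨s + q.1, by have := q.1.isLt; omega⟩ : Fin (γ.len + 1)),
       (⟨s + q.2, by have := q.2.isLt; omega⟩ : Fin (γ.len + 1))))
    (fun p => ((⟨(p.1 : ℕ) - s, by have := p.1.isLt; omega⟩ : Fin (γ.len - s + 1)),
               (⟨(p.2 : ℕ) - s, by have := p.2.isLt; omega⟩ : Fin (γ.len - s + 1))))
    (fun q _ => by simp)
    (fun p hp => Finset.mem_univ _)
    (fun q _ => by refine Prod.ext (Fin.ext ?_) (Fin.ext ?_) <;> simp)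
    (fun p hp => by
      simp only [Finset.mem_filter] at hp
      refine Prod.ext (Fin.ext ?_) (Fin.ext ?_) <;> simp <;> omega)
    (fun q _ => by
      simp only [pf, drop_f, Fin.lt_def]
      refine if_congr ?_ rfl rfl
      constructor
      · rintro ⟨hlt, hf⟩; exact ⟨by omega, hf⟩
      · rintro ⟨hlt, hf⟩; exact ⟨by omega, hf⟩)

lemma weight_le_take_mul_drop (h0 : 0 ≤ lam) (h1 : lam ≤ 1) (γ : SAWPath d) (s : ℕ)
    (hs : s ≤ γ.len) :
    weight lam γ ≤ weight lam (γ.take s hs) * weight lam (γ.drop s hs) := by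
  classical
  rw [weight_take_prod, weight_drop_prod, ← Finset.prod_union_inter, weight_eq_prod]
  set A := Finset.univ.filter
    (fun p : Fin (γ.len + 1) × Fin (γ.len + 1) => (p.1 : ℕ) ≤ s ∧ (p.2 : ℕ) ≤ s) with hA
  set B := Finset.univ.filter
    (fun p : Fin (γ.len + 1) × Fin (γ.len + 1) => s ≤ (p.1 : ℕ) ∧ s ≤ (p.2 : ℕ)) with hB
  have hinter : ∏ p ∈ A ∩ B, pf lam γ.f p = 1 := by
    refine Finset.prod_eq_one fun p hp => ?_
    simp only [hA, hB, Finset.mem_inter, Finset.mem_filter] at hp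
    rw [pf, if_neg]
    rintro ⟨hlt, -⟩
    rw [Fin.lt_def] at hlt
    omega
  rw [hinter, mul_one]
  exact prod_subset_le (Finset.subset_univ _) (fun p => pf_nonneg h1 _ p)
    (fun p => pf_le_one h0 _ p)

lemma weight_glue (lam : ℝ) (γ₁ γ₂ : SAWPath d) (h) :
    weight lam (glue γ₁ γ₂ h) =
      weight lam γ₁ * weight lam γ₂ *
        ∏ s : Fin (γ₁.len + 1), ∏ t : Fin (γ₂.len + 1),
          (if γ₁.f s = γ₂.f t then 1 - lam else 1) := by
  classical
  set e : Fin (γ₁.len + 1) ⊕ Fin (γ₂.len + 1) ≃ Fin ((γ₁.len + 1) + (γ₂.len + 1)) :=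
    finSumFinEquiv with he
  have hf1 : ∀ s : Fin (γ₁.len + 1), (glue γ₁ γ₂ h).f (e (Sum.inl s)) = γ₁.f s := by
    intro s
    rw [he, finSumFinEquiv_apply_left]
    exact dif_pos (by have := s.isLt; simpa using by omega)
  have hf2 : ∀ t : Fin (γ₂.len + 1), (glue γ₁ γ₂ h).f (e (Sum.inr t)) = γ₂.f t := by
    intro t
    rw [he, finSumFinEquiv_apply_right]
    exact (dif_neg (by simp; omega)).trans (congrArg γ₂.f (Fin.ext (by simp)))
  have ho1 : ∀ s t : Fin (γ₁.len + 1), (e (Sum.inl s) < e (Sum.inl t)) ↔ s < t := by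
    intro s t
    rw [he, finSumFinEquiv_apply_left, finSumFinEquiv_apply_left, Fin.lt_def, Fin.lt_def]
    simp
  have ho2 : ∀ s t : Fin (γ₂.len + 1), (e (Sum.inr s) < e (Sum.inr t)) ↔ s < t := by
    intro s t
    rw [he, finSumFinEquiv_apply_right, finSumFinEquiv_apply_right, Fin.lt_def, Fin.lt_def]
    simp
  have ho3 : ∀ (s : Fin (γ₁.len + 1)) (t : Fin (γ₂.len + 1)),
      (e (Sum.inl s) < e (Sum.inr t)) ↔ True := by
    intro s t
    rw [he, finSumFinEquiv_apply_left, finSumFinEquiv_apply_right, Fin.lt_def]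
    have := s.isLt
    simp
    omega
  have ho4 : ∀ (t : Fin (γ₂.len + 1)) (s : Fin (γ₁.len + 1)),
      (e (Sum.inr t) < e (Sum.inl s)) ↔ False := by
    intro t s
    rw [he, finSumFinEquiv_apply_right, finSumFinEquiv_apply_left, Fin.lt_def]
    have := s.isLt
    simp
    omega
  calc weight lam (glue γ₁ γ₂ h)
      = ∏ a : Fin (γ₁.len + 1) ⊕ Fin (γ₂.len + 1), ∏ b : Fin (γ₁.len + 1) ⊕ Fin (γ₂.len + 1),
          (if e a < e b ∧ (glue γ₁ γ₂ h).f (e a) = (glue γ₁ γ₂ h).f (e b) then 1 - lam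
            else 1) := by
        rw [show weight lam (glue γ₁ γ₂ h) = ∏ s : Fin ((γ₁.len + 1) + (γ₂.len + 1)),
          ∏ t : Fin ((γ₁.len + 1) + (γ₂.len + 1)),
            (if s < t ∧ (glue γ₁ γ₂ h).f s = (glue γ₁ γ₂ h).f t then 1 - lam else 1) from rfl]
        rw [← Equiv.prod_comp e (fun s : Fin ((γ₁.len + 1) + (γ₂.len + 1)) =>
          ∏ t : Fin ((γ₁.len + 1) + (γ₂.len + 1)),
            (if s < t ∧ (glue γ₁ γ₂ h).f s = (glue γ₁ γ₂ h).f t then 1 - lam else 1))]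
        exact Finset.prod_congr rfl fun a _ => (Equiv.prod_comp e _).symm
    _ = weight lam γ₁ * weight lam γ₂ *
        ∏ s : Fin (γ₁.len + 1), ∏ t : Fin (γ₂.len + 1),
          (if γ₁.f s = γ₂.f t then 1 - lam else 1) := by
        rw [Fintype.prod_sum_type]
        rw [Finset.prod_congr rfl fun a (_ : a ∈ Finset.univ) =>
          Fintype.prod_sum_type (fun b => if e (Sum.inl a) < e b ∧
            (glue γ₁ γ₂ h).f (e (Sum.inl a)) = (glue γ₁ γ₂ h).f (e b) then 1 - lam else 1)]
        rw [Finset.prod_congr rfl fun a (_ : a ∈ Finset.univ) =>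
          Fintype.prod_sum_type (fun b => if e (Sum.inr a) < e b ∧
            (glue γ₁ γ₂ h).f (e (Sum.inr a)) = (glue γ₁ γ₂ h).f (e b) then 1 - lam else 1)]
        simp only [hf1, hf2, ho1, ho2, ho3, ho4, true_and, false_and, if_false]
        rw [Finset.prod_mul_distrib, Finset.prod_mul_distrib]
        simp only [Finset.prod_const_one, mul_one, one_mul]
        rw [weight, weight]
        ring

lemma key_real {lam β : ℝ} (h0 : 0 ≤ lam) (h1 : lam ≤ 1) (hβ : 0 ≤ β)
    (γ₁ γ₂ : SAWPath d) (hadj : Adj (γ₁.f (Fin.last γ₁.len)) (γ₂.f 0)) :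
    β ^ γ₁.len * weight lam γ₁ * β * (β ^ γ₂.len * weight lam γ₂) ≤
      β ^ (glue γ₁ γ₂ hadj).len * weight lam (glue γ₁ γ₂ hadj) +
      lam * ∑ q : Fin (γ₁.len + 1) × Fin (γ₂.len + 1),
        (if γ₁.f q.1 = γ₂.f q.2 then
          β ^ (q.1 : ℕ) * weight lam (γ₁.take q.1 (Fin.is_le q.1)) *
            (β ^ (γ₁.len - (q.1 : ℕ)) * weight lam (γ₁.drop q.1 (Fin.is_le q.1))) * β *
            (β ^ (q.2 : ℕ) * weight lam (γ₂.take q.2 (Fin.is_le q.2))) *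
            (β ^ (γ₂.len - (q.2 : ℕ)) * weight lam (γ₂.drop q.2 (Fin.is_le q.2)))
        else 0) := by
  classical
  have hβL : 0 ≤ β ^ (γ₁.len + 1 + γ₂.len) := pow_nonneg hβ _
  have hρ1 := weight_nonneg h1 γ₁
  have hρ2 := weight_nonneg h1 γ₂
  have hLpow : β ^ (γ₁.len + 1 + γ₂.len) = β ^ γ₁.len * β * β ^ γ₂.len := by
    rw [pow_add, pow_add, pow_one]
  have hsplit : ∀ (n k : ℕ), k ≤ n → β ^ k * β ^ (n - k) = β ^ n := by
    intro n k hk; rw [← pow_add]; congr 1; omega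
  have hglue := weight_glue lam γ₁ γ₂ hadj
  set C := ∏ s : Fin (γ₁.len + 1), ∏ t : Fin (γ₂.len + 1),
    (if γ₁.f s = γ₂.f t then 1 - lam else 1) with hCdef
  have hCprod : C = ∏ q : Fin (γ₁.len + 1) × Fin (γ₂.len + 1),
      (if γ₁.f q.1 = γ₂.f q.2 then 1 - lam else 1) :=
    (Fintype.prod_prod_type' fun s t => if γ₁.f s = γ₂.f t then 1 - lam else 1).symm
  have honesub : 1 - C ≤ ∑ q : Fin (γ₁.len + 1) × Fin (γ₂.len + 1),
      (1 - (if γ₁.f q.1 = γ₂.f q.2 then 1 - lam else 1)) := by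
    rw [hCprod]
    exact one_sub_prod_le _ _ (fun q => by split <;> linarith) (fun q => by split <;> linarith)
  have claim : ∀ q : Fin (γ₁.len + 1) × Fin (γ₂.len + 1),
      β ^ (γ₁.len + 1 + γ₂.len) * (weight lam γ₁ * weight lam γ₂) *
        (1 - (if γ₁.f q.1 = γ₂.f q.2 then 1 - lam else 1)) ≤
      lam * (if γ₁.f q.1 = γ₂.f q.2 then
          β ^ (q.1 : ℕ) * weight lam (γ₁.take q.1 (Fin.is_le q.1)) *
            (β ^ (γ₁.len - (q.1 : ℕ)) * weight lam (γ₁.drop q.1 (Fin.is_le q.1))) * β *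
            (β ^ (q.2 : ℕ) * weight lam (γ₂.take q.2 (Fin.is_le q.2))) *
            (β ^ (γ₂.len - (q.2 : ℕ)) * weight lam (γ₂.drop q.2 (Fin.is_le q.2)))
        else 0) := by
    intro q
    by_cases hcol : γ₁.f q.1 = γ₂.f q.2
    · rw [if_pos hcol, if_pos hcol]
      have ht1 := weight_le_take_mul_drop h0 h1 γ₁ q.1 (Fin.is_le q.1)
      have ht2 := weight_le_take_mul_drop h0 h1 γ₂ q.2 (Fin.is_le q.2)
      have hT1 := weight_nonneg h1 (γ₁.take q.1 (Fin.is_le q.1))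
      have hD1 := weight_nonneg h1 (γ₁.drop q.1 (Fin.is_le q.1))
      have hT2 := weight_nonneg h1 (γ₂.take q.2 (Fin.is_le q.2))
      have hD2 := weight_nonneg h1 (γ₂.drop q.2 (Fin.is_le q.2))
      have e1 := hsplit γ₁.len q.1 (Fin.is_le q.1)
      have e2 := hsplit γ₂.len q.2 (Fin.is_le q.2)
      have hbr : β ^ (q.1 : ℕ) * weight lam (γ₁.take q.1 (Fin.is_le q.1)) *
            (β ^ (γ₁.len - (q.1 : ℕ)) * weight lam (γ₁.drop q.1 (Fin.is_le q.1))) * β *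
            (β ^ (q.2 : ℕ) * weight lam (γ₂.take q.2 (Fin.is_le q.2))) *
            (β ^ (γ₂.len - (q.2 : ℕ)) * weight lam (γ₂.drop q.2 (Fin.is_le q.2))) =
          β ^ (γ₁.len + 1 + γ₂.len) *
            (weight lam (γ₁.take q.1 (Fin.is_le q.1)) * weight lam (γ₁.drop q.1 (Fin.is_le q.1)) *
              (weight lam (γ₂.take q.2 (Fin.is_le q.2)) *
                weight lam (γ₂.drop q.2 (Fin.is_le q.2)))) := by
        calc β ^ (q.1 : ℕ) * weight lam (γ₁.take q.1 (Fin.is_le q.1)) *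
            (β ^ (γ₁.len - (q.1 : ℕ)) * weight lam (γ₁.drop q.1 (Fin.is_le q.1))) * β *
            (β ^ (q.2 : ℕ) * weight lam (γ₂.take q.2 (Fin.is_le q.2))) *
            (β ^ (γ₂.len - (q.2 : ℕ)) * weight lam (γ₂.drop q.2 (Fin.is_le q.2)))
            = (β ^ (q.1 : ℕ) * β ^ (γ₁.len - (q.1 : ℕ))) * (β ^ (q.2 : ℕ) * β ^ (γ₂.len - (q.2 : ℕ))) * β *
              (weight lam (γ₁.take q.1 (Fin.is_le q.1)) * weight lam (γ₁.drop q.1 (Fin.is_le q.1)) *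
                (weight lam (γ₂.take q.2 (Fin.is_le q.2)) *
                  weight lam (γ₂.drop q.2 (Fin.is_le q.2)))) := by ring
          _ = β ^ γ₁.len * β ^ γ₂.len * β *
              (weight lam (γ₁.take q.1 (Fin.is_le q.1)) * weight lam (γ₁.drop q.1 (Fin.is_le q.1)) *
                (weight lam (γ₂.take q.2 (Fin.is_le q.2)) *
                  weight lam (γ₂.drop q.2 (Fin.is_le q.2)))) := by rw [e1, e2]
          _ = _ := by rw [hLpow]; ring
      rw [hbr]
      have hmono : weight lam γ₁ * weight lam γ₂ ≤
          weight lam (γ₁.take q.1 (Fin.is_le q.1)) * weight lam (γ₁.drop q.1 (Fin.is_le q.1)) *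
            (weight lam (γ₂.take q.2 (Fin.is_le q.2)) *
              weight lam (γ₂.drop q.2 (Fin.is_le q.2))) :=
        mul_le_mul ht1 ht2 hρ2 (mul_nonneg hT1 hD1)
      have hls : (1 : ℝ) - (1 - lam) = lam := by ring
      rw [hls]
      nlinarith [mul_nonneg hβL h0]
    · rw [if_neg hcol, if_neg hcol]
      simp
  calc β ^ γ₁.len * weight lam γ₁ * β * (β ^ γ₂.len * weight lam γ₂)
      = β ^ (γ₁.len + 1 + γ₂.len) * (weight lam γ₁ * weight lam γ₂ * C)
        + β ^ (γ₁.len + 1 + γ₂.len) * (weight lam γ₁ * weight lam γ₂) * (1 - C) := by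
        rw [hLpow]; ring
    _ ≤ β ^ (glue γ₁ γ₂ hadj).len * weight lam (glue γ₁ γ₂ hadj) +
        lam * ∑ q : Fin (γ₁.len + 1) × Fin (γ₂.len + 1),
        (if γ₁.f q.1 = γ₂.f q.2 then
          β ^ (q.1 : ℕ) * weight lam (γ₁.take q.1 (Fin.is_le q.1)) *
            (β ^ (γ₁.len - (q.1 : ℕ)) * weight lam (γ₁.drop q.1 (Fin.is_le q.1))) * β *
            (β ^ (q.2 : ℕ) * weight lam (γ₂.take q.2 (Fin.is_le q.2))) *
            (β ^ (γ₂.len - (q.2 : ℕ)) * weight lam (γ₂.drop q.2 (Fin.is_le q.2)))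
        else 0) := by
        have hfirst : β ^ (γ₁.len + 1 + γ₂.len) * (weight lam γ₁ * weight lam γ₂ * C) =
            β ^ (glue γ₁ γ₂ hadj).len * weight lam (glue γ₁ γ₂ hadj) := by
          rw [len_glue, hglue, hCdef]
        have hsecond : β ^ (γ₁.len + 1 + γ₂.len) * (weight lam γ₁ * weight lam γ₂) * (1 - C) ≤
            lam * ∑ q : Fin (γ₁.len + 1) × Fin (γ₂.len + 1),
            (if γ₁.f q.1 = γ₂.f q.2 then
              β ^ (q.1 : ℕ) * weight lam (γ₁.take q.1 (Fin.is_le q.1)) *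
                (β ^ (γ₁.len - (q.1 : ℕ)) * weight lam (γ₁.drop q.1 (Fin.is_le q.1))) * β *
                (β ^ (q.2 : ℕ) * weight lam (γ₂.take q.2 (Fin.is_le q.2))) *
                (β ^ (γ₂.len - (q.2 : ℕ)) * weight lam (γ₂.drop q.2 (Fin.is_le q.2)))
            else 0) := by
          calc β ^ (γ₁.len + 1 + γ₂.len) * (weight lam γ₁ * weight lam γ₂) * (1 - C)
              ≤ β ^ (γ₁.len + 1 + γ₂.len) * (weight lam γ₁ * weight lam γ₂) *
                ∑ q : Fin (γ₁.len + 1) × Fin (γ₂.len + 1),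
                  (1 - (if γ₁.f q.1 = γ₂.f q.2 then 1 - lam else 1)) :=
              mul_le_mul_of_nonneg_left honesub (mul_nonneg hβL (mul_nonneg hρ1 hρ2))
            _ = ∑ q : Fin (γ₁.len + 1) × Fin (γ₂.len + 1),
                β ^ (γ₁.len + 1 + γ₂.len) * (weight lam γ₁ * weight lam γ₂) *
                  (1 - (if γ₁.f q.1 = γ₂.f q.2 then 1 - lam else 1)) := by
              rw [Finset.mul_sum]
            _ ≤ _ := by
              rw [Finset.mul_sum]
              exact Finset.sum_le_sum fun q _ => claim q
        rw [hfirst]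
        exact add_le_add le_rfl hsecond

noncomputable def pterm (lam β : ℝ) (γ : SAWPath d) : ℝ≥0∞ :=
  ENNReal.ofReal (β ^ γ.len * weight lam γ)

lemma key_enn {lam β : ℝ} (h0 : 0 ≤ lam) (h1 : lam ≤ 1) (hβ : 0 ≤ β)
    (γ₁ γ₂ : SAWPath d) (hadj : Adj (γ₁.f (Fin.last γ₁.len)) (γ₂.f 0)) :
    pterm lam β γ₁ * ENNReal.ofReal β * pterm lam β γ₂ ≤
      pterm lam β (glue γ₁ γ₂ hadj) +
      ENNReal.ofReal lam * ∑ q : Fin (γ₁.len + 1) × Fin (γ₂.len + 1),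
        (if γ₁.f q.1 = γ₂.f q.2 then
          pterm lam β (γ₁.take q.1 (Fin.is_le q.1)) *
            pterm lam β (γ₁.drop q.1 (Fin.is_le q.1)) * ENNReal.ofReal β *
            pterm lam β (γ₂.take q.2 (Fin.is_le q.2)) *
            pterm lam β (γ₂.drop q.2 (Fin.is_le q.2))
        else 0) := by
  classical
  have hw : ∀ γ : SAWPath d, 0 ≤ β ^ γ.len * weight lam γ := fun γ =>
    mul_nonneg (pow_nonneg hβ _) (weight_nonneg h1 _)
  have hBig : ∀ q : Fin (γ₁.len + 1) × Fin (γ₂.len + 1),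
      0 ≤ (if γ₁.f q.1 = γ₂.f q.2 then
          β ^ (q.1 : ℕ) * weight lam (γ₁.take q.1 (Fin.is_le q.1)) *
            (β ^ (γ₁.len - (q.1 : ℕ)) * weight lam (γ₁.drop q.1 (Fin.is_le q.1))) * β *
            (β ^ (q.2 : ℕ) * weight lam (γ₂.take q.2 (Fin.is_le q.2))) *
            (β ^ (γ₂.len - (q.2 : ℕ)) * weight lam (γ₂.drop q.2 (Fin.is_le q.2)))
        else 0) := by
    intro q
    split
    · exact mul_nonneg (mul_nonneg (mul_nonneg (mul_nonneg
        (mul_nonneg (pow_nonneg hβ _) (weight_nonneg h1 _))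
        (mul_nonneg (pow_nonneg hβ _) (weight_nonneg h1 _))) hβ)
        (mul_nonneg (pow_nonneg hβ _) (weight_nonneg h1 _)))
        (mul_nonneg (pow_nonneg hβ _) (weight_nonneg h1 _))
    · exact le_refl 0
  calc pterm lam β γ₁ * ENNReal.ofReal β * pterm lam β γ₂
      = ENNReal.ofReal (β ^ γ₁.len * weight lam γ₁ * β * (β ^ γ₂.len * weight lam γ₂)) := by
        rw [pterm, pterm, ← ENNReal.ofReal_mul (hw γ₁),
          ← ENNReal.ofReal_mul (mul_nonneg (hw γ₁) hβ)]
    _ ≤ ENNReal.ofReal (β ^ (glue γ₁ γ₂ hadj).len * weight lam (glue γ₁ γ₂ hadj) +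
        lam * ∑ q : Fin (γ₁.len + 1) × Fin (γ₂.len + 1),
        (if γ₁.f q.1 = γ₂.f q.2 then
          β ^ (q.1 : ℕ) * weight lam (γ₁.take q.1 (Fin.is_le q.1)) *
            (β ^ (γ₁.len - (q.1 : ℕ)) * weight lam (γ₁.drop q.1 (Fin.is_le q.1))) * β *
            (β ^ (q.2 : ℕ) * weight lam (γ₂.take q.2 (Fin.is_le q.2))) *
            (β ^ (γ₂.len - (q.2 : ℕ)) * weight lam (γ₂.drop q.2 (Fin.is_le q.2)))
        else 0)) := ENNReal.ofReal_le_ofReal (key_real h0 h1 hβ γ₁ γ₂ hadj)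
    _ = pterm lam β (glue γ₁ γ₂ hadj) +
      ENNReal.ofReal lam * ∑ q : Fin (γ₁.len + 1) × Fin (γ₂.len + 1),
        (if γ₁.f q.1 = γ₂.f q.2 then
          pterm lam β (γ₁.take q.1 (Fin.is_le q.1)) *
            pterm lam β (γ₁.drop q.1 (Fin.is_le q.1)) * ENNReal.ofReal β *
            pterm lam β (γ₂.take q.2 (Fin.is_le q.2)) *
            pterm lam β (γ₂.drop q.2 (Fin.is_le q.2))
        else 0) := by
        rw [ENNReal.ofReal_add (hw _) (mul_nonneg h0 (Finset.sum_nonneg fun q _ => hBig q))]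
        rw [ENNReal.ofReal_mul h0, ENNReal.ofReal_sum_of_nonneg fun q _ => hBig q]
        rw [pterm]
        congr 1
        refine congrArg _ (Finset.sum_congr rfl fun q _ => ?_)
        by_cases hc : γ₁.f q.1 = γ₂.f q.2
        · rw [if_pos hc, if_pos hc]
          have p1 : 0 ≤ β ^ (q.1 : ℕ) * weight lam (γ₁.take q.1 (Fin.is_le q.1)) :=
            mul_nonneg (pow_nonneg hβ _) (weight_nonneg h1 _)
          have p2 : 0 ≤ β ^ (q.1 : ℕ) * weight lam (γ₁.take q.1 (Fin.is_le q.1)) *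
              (β ^ (γ₁.len - (q.1 : ℕ)) * weight lam (γ₁.drop q.1 (Fin.is_le q.1))) :=
            mul_nonneg p1 (mul_nonneg (pow_nonneg hβ _) (weight_nonneg h1 _))
          have p3 : 0 ≤ β ^ (q.1 : ℕ) * weight lam (γ₁.take q.1 (Fin.is_le q.1)) *
              (β ^ (γ₁.len - (q.1 : ℕ)) * weight lam (γ₁.drop q.1 (Fin.is_le q.1))) * β :=
            mul_nonneg p2 hβ
          have p4 : 0 ≤ β ^ (q.1 : ℕ) * weight lam (γ₁.take q.1 (Fin.is_le q.1)) *
              (β ^ (γ₁.len - (q.1 : ℕ)) * weight lam (γ₁.drop q.1 (Fin.is_le q.1))) * β *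
              (β ^ (q.2 : ℕ) * weight lam (γ₂.take q.2 (Fin.is_le q.2))) :=
            mul_nonneg p3 (mul_nonneg (pow_nonneg hβ _) (weight_nonneg h1 _))
          rw [ENNReal.ofReal_mul p4, ENNReal.ofReal_mul p3, ENNReal.ofReal_mul p2,
            ENNReal.ofReal_mul p1]
          rfl
        · rw [if_neg hc, if_neg hc, ENNReal.ofReal_zero]

end Weight

section Main
variable {d : ℕ} (lam β : ℝ) (S Λ : Set (V d)) (x : V d)

open SAWPath
open scoped Classical

/-- Pair (boundary-edge) index type. -/
abbrev PairsSL (S Λ : Set (V d)) := {p : V d × V d // p.1 ∈ S ∧ p.2 ∈ Λ \ S ∧ Adj p.1 p.2}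

/-- Condition for a triple `(p, γ₁, γ₂)`. -/
def cndK (k : PairsSL S Λ × (SAWPath d × SAWPath d)) : Prop :=
  k.2.1 ∈ PathsIn S 0 k.1.1.1 ∧ k.2.2 ∈ PathsIn Λ k.1.1.2 x

lemma adj_of_cnd {k : PairsSL S Λ × (SAWPath d × SAWPath d)} (h : cndK S Λ x k) :
    Adj (k.2.1.f (Fin.last k.2.1.len)) (k.2.2.f 0) := by
  rw [h.1.2.1, h.2.1]
  exact k.1.2.2.2

/-- summand of B -/
noncomputable def fK (k : PairsSL S Λ × (SAWPath d × SAWPath d)) : ℝ≥0∞ :=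
  if cndK S Λ x k then pterm lam β k.2.1 * ENNReal.ofReal β * pterm lam β k.2.2 else 0

/-- main (glued) part -/
noncomputable def Mfun (k : PairsSL S Λ × (SAWPath d × SAWPath d)) : ℝ≥0∞ :=
  if h : cndK S Λ x k then pterm lam β (glue k.2.1 k.2.2 (adj_of_cnd S Λ x h)) else 0

/-- condition for the correction term -/
def cndR (j : (PairsSL S Λ × (SAWPath d × SAWPath d)) × ℕ × ℕ) : Prop :=
  cndK S Λ x j.1 ∧ j.2.1 ≤ j.1.2.1.len ∧ j.2.2 ≤ j.1.2.2.len ∧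
    j.1.2.1.eval j.2.1 = j.1.2.2.eval j.2.2

/-- correction summand -/
noncomputable def Rfun (j : (PairsSL S Λ × (SAWPath d × SAWPath d)) × ℕ × ℕ) : ℝ≥0∞ :=
  if h : cndR S Λ x j then
    pterm lam β (j.1.2.1.take j.2.1 h.2.1) * pterm lam β (j.1.2.1.drop j.2.1 h.2.1) *
      ENNReal.ofReal β * pterm lam β (j.1.2.2.take j.2.2 h.2.2.1) *
      pterm lam β (j.1.2.2.drop j.2.2 h.2.2.1)
  else 0

lemma Rfun_pos (p : PairsSL S Λ) (γ₁ γ₂ : SAWPath d) (s t : ℕ)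
    (hc : cndK S Λ x (p, γ₁, γ₂)) (hs : s ≤ γ₁.len) (ht : t ≤ γ₂.len)
    (hcol : γ₁.eval s = γ₂.eval t) :
    Rfun lam β S Λ x ((p, γ₁, γ₂), (s, t)) =
      pterm lam β (γ₁.take s hs) * pterm lam β (γ₁.drop s hs) * ENNReal.ofReal β *
        pterm lam β (γ₂.take t ht) * pterm lam β (γ₂.drop t ht) := by
  have hcnd : cndR S Λ x ((p, γ₁, γ₂), (s, t)) := ⟨hc, hs, ht, hcol⟩
  unfold Rfun
  rw [dif_pos hcnd]

lemma Rfun_ne (j : (PairsSL S Λ × (SAWPath d × SAWPath d)) × ℕ × ℕ)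
    (hn : ¬ cndR S Λ x j) : Rfun lam β S Λ x j = 0 := by
  unfold Rfun
  rw [dif_neg hn]

/-- expanded summand of the error amplitude term -/
noncomputable def gfun
    (w : V d × PairsSL S Λ × (SAWPath d × SAWPath d × SAWPath d × SAWPath d)) : ℝ≥0∞ :=
  if w.2.2.1 ∈ PathsIn S 0 w.1 ∧ w.2.2.2.1 ∈ PathsIn S w.1 w.2.1.1.1 ∧
      w.2.2.2.2.1 ∈ PathsIn Λ w.2.1.1.2 w.1 ∧ w.2.2.2.2.2 ∈ PathsIn Λ w.1 x then
    pterm lam β w.2.2.1 * pterm lam β w.2.2.2.1 * ENNReal.ofReal β *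
      pterm lam β w.2.2.2.2.1 * pterm lam β w.2.2.2.2.2
  else 0

lemma tsum_mul_tsum' {α α' : Type*} (f : α → ℝ≥0∞) (g : α' → ℝ≥0∞) :
    (∑' a, f a) * (∑' b, g b) = ∑' q : α × α', f q.1 * g q.2 := by
  rw [ENNReal.tsum_prod']
  simp_rw [ENNReal.tsum_mul_left]
  rw [ENNReal.tsum_mul_right]

lemma G_as_tsum (Λ' : Set (V d)) (a b : V d) :
    G lam β Λ' a b = ∑' γ : SAWPath d, Set.indicator (PathsIn Λ' a b) (pterm lam β) γ := by
  rw [show G lam β Λ' a b = ∑' γ : PathsIn Λ' a b, pterm lam β γ.1 from rfl]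
  exact tsum_subtype _ _

lemma L_B :
    (∑' p : PairsSL S Λ, G lam β S 0 p.1.1 * ENNReal.ofReal β * G lam β Λ p.1.2 x) =
      ∑' k : PairsSL S Λ × (SAWPath d × SAWPath d), fK lam β S Λ x k := by
  have hpt : ∀ p : PairsSL S Λ,
      G lam β S 0 p.1.1 * ENNReal.ofReal β * G lam β Λ p.1.2 x =
        ∑' q : SAWPath d × SAWPath d, fK lam β S Λ x (p, q) := by
    intro p
    rw [G_as_tsum lam β S 0 p.1.1, G_as_tsum lam β Λ p.1.2 x,
      ← ENNReal.tsum_mul_right, tsum_mul_tsum']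
    refine tsum_congr fun q => ?_
    rw [fK, cndK]
    by_cases h1 : q.1 ∈ PathsIn S 0 p.1.1 <;> by_cases h2 : q.2 ∈ PathsIn Λ p.1.2 x <;>
      simp [Set.indicator, h1, h2]
  rw [ENNReal.tsum_prod']
  exact tsum_congr hpt

lemma L_point (h0 : 0 ≤ lam) (h1 : lam ≤ 1) (hβ : 0 ≤ β)
    (k : PairsSL S Λ × (SAWPath d × SAWPath d)) :
    fK lam β S Λ x k ≤ Mfun lam β S Λ x k +
      ENNReal.ofReal lam * ∑' st : ℕ × ℕ, Rfun lam β S Λ x (k, st) := by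
  by_cases hc : cndK S Λ x k
  · obtain ⟨p, γ₁, γ₂⟩ := k
    have hvan1 : ∀ s ∉ Finset.range (γ₁.len + 1),
        (∑' t : ℕ, Rfun lam β S Λ x ((p, γ₁, γ₂), (s, t))) = 0 := by
      intro s hs
      rw [Finset.mem_range] at hs
      have hz : ∀ t : ℕ, Rfun lam β S Λ x ((p, γ₁, γ₂), (s, t)) = 0 := fun t =>
        Rfun_ne lam β S Λ x _ (fun hr => by have h' : s ≤ γ₁.len := hr.2.1; omega)
      simp [hz]
    have hvan2 : ∀ s : ℕ, ∀ t ∉ Finset.range (γ₂.len + 1),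
        Rfun lam β S Λ x ((p, γ₁, γ₂), (s, t)) = 0 := by
      intro s t ht
      rw [Finset.mem_range] at ht
      exact Rfun_ne lam β S Λ x _ (fun hr => by have h' : t ≤ γ₂.len := hr.2.2.1; omega)
    have hsum : (∑' st : ℕ × ℕ, Rfun lam β S Λ x ((p, γ₁, γ₂), st)) =
        ∑ q : Fin (γ₁.len + 1) × Fin (γ₂.len + 1),
          (if γ₁.f q.1 = γ₂.f q.2 then
            pterm lam β (γ₁.take q.1 (Fin.is_le q.1)) *
              pterm lam β (γ₁.drop q.1 (Fin.is_le q.1)) * ENNReal.ofReal β *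
              pterm lam β (γ₂.take q.2 (Fin.is_le q.2)) *
              pterm lam β (γ₂.drop q.2 (Fin.is_le q.2))
          else 0) := by
      rw [ENNReal.tsum_prod', tsum_eq_sum hvan1]
      have h2 : ∀ s ∈ Finset.range (γ₁.len + 1),
          (∑' t : ℕ, Rfun lam β S Λ x ((p, γ₁, γ₂), (s, t))) =
            ∑ t ∈ Finset.range (γ₂.len + 1), Rfun lam β S Λ x ((p, γ₁, γ₂), (s, t)) :=
        fun s _ => tsum_eq_sum (hvan2 s)
      rw [Finset.sum_congr rfl h2]
      refine Eq.symm ?_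
      have hsp : (∑ q : Fin (γ₁.len + 1) × Fin (γ₂.len + 1),
          (if γ₁.f q.1 = γ₂.f q.2 then
            pterm lam β (γ₁.take q.1 (Fin.is_le q.1)) *
              pterm lam β (γ₁.drop q.1 (Fin.is_le q.1)) * ENNReal.ofReal β *
              pterm lam β (γ₂.take q.2 (Fin.is_le q.2)) *
              pterm lam β (γ₂.drop q.2 (Fin.is_le q.2))
          else 0)) = ∑ s : Fin (γ₁.len + 1), ∑ t : Fin (γ₂.len + 1),
          (if γ₁.f s = γ₂.f t then
            pterm lam β (γ₁.take s (Fin.is_le s)) *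
              pterm lam β (γ₁.drop s (Fin.is_le s)) * ENNReal.ofReal β *
              pterm lam β (γ₂.take t (Fin.is_le t)) *
              pterm lam β (γ₂.drop t (Fin.is_le t))
          else 0) := Fintype.sum_prod_type'
            (f := fun (s : Fin (γ₁.len + 1)) (t : Fin (γ₂.len + 1)) =>
              (if γ₁.f s = γ₂.f t then
                pterm lam β (γ₁.take s (Fin.is_le s)) *
                  pterm lam β (γ₁.drop s (Fin.is_le s)) * ENNReal.ofReal β *
                  pterm lam β (γ₂.take t (Fin.is_le t)) *
                  pterm lam β (γ₂.drop t (Fin.is_le t))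
              else 0))
      rw [hsp]
      have h3 : ∀ s : Fin (γ₁.len + 1),
          (∑ t : Fin (γ₂.len + 1), (if γ₁.f s = γ₂.f t then
            pterm lam β (γ₁.take s (Fin.is_le s)) *
              pterm lam β (γ₁.drop s (Fin.is_le s)) * ENNReal.ofReal β *
              pterm lam β (γ₂.take t (Fin.is_le t)) *
              pterm lam β (γ₂.drop t (Fin.is_le t))
          else 0)) = ∑ t ∈ Finset.range (γ₂.len + 1),
            Rfun lam β S Λ x ((p, γ₁, γ₂), ((s : ℕ), t)) := by
        intro s
        rw [← Fin.sum_univ_eq_sum_range (fun t => Rfun lam β S Λ x ((p, γ₁, γ₂), ((s : ℕ), t)))]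
        refine Finset.sum_congr rfl fun t _ => ?_
        by_cases hcol : γ₁.f s = γ₂.f t
        · rw [if_pos hcol, Rfun_pos lam β S Λ x p γ₁ γ₂ (s : ℕ) (t : ℕ) hc (Fin.is_le s)
            (Fin.is_le t) (by rw [eval_fin, eval_fin]; exact hcol)]
        · rw [if_neg hcol]
          refine (Rfun_ne lam β S Λ x _ (fun hr => hcol ?_)).symm
          have := hr.2.2.2
          rwa [eval_fin, eval_fin] at this
      rw [Finset.sum_congr rfl fun s (_ : s ∈ Finset.univ) => h3 s]
      exact (Fin.sum_univ_eq_sum_range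
        (fun s => ∑ t ∈ Finset.range (γ₂.len + 1), Rfun lam β S Λ x ((p, γ₁, γ₂), (s, t))) _)
    rw [hsum]
    rw [show fK lam β S Λ x (p, γ₁, γ₂) =
      pterm lam β γ₁ * ENNReal.ofReal β * pterm lam β γ₂ from if_pos hc]
    rw [show Mfun lam β S Λ x (p, γ₁, γ₂) =
      pterm lam β (glue γ₁ γ₂ (adj_of_cnd S Λ x hc)) from dif_pos hc]
    exact key_enn h0 h1 hβ γ₁ γ₂ _
  · rw [fK, if_neg hc]
    exact zero_le

lemma L_A (hSΛ : S ⊆ Λ) :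
    G lam β S 0 x ≤
      ∑' γc : ↥{γ : ↥(PathsIn Λ 0 x) | ∀ i, (γ : SAWPath d).f i ∈ S},
        pterm lam β ((γc : ↥(PathsIn Λ 0 x)) : SAWPath d) := by
  let ι : ↥(PathsIn S 0 x) → ↥{γ : ↥(PathsIn Λ 0 x) | ∀ i, (γ : SAWPath d).f i ∈ S} :=
    fun γ => ⟨⟨(γ : SAWPath d), ⟨γ.2.1, γ.2.2.1, fun i => hSΛ (γ.2.2.2 i)⟩⟩, fun i => γ.2.2.2 i⟩
  have hinj : Function.Injective ι := fun a b h =>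
    Subtype.ext (congrArg (fun z : ↥{γ : ↥(PathsIn Λ 0 x) | ∀ i, (γ : SAWPath d).f i ∈ S} =>
      ((z : ↥(PathsIn Λ 0 x)) : SAWPath d)) h)
  exact ENNReal.tsum_comp_le_tsum_of_injective hinj
    (fun γc => pterm lam β ((γc : ↥(PathsIn Λ 0 x)) : SAWPath d))

lemma L_M (hSΛ : S ⊆ Λ) (h0S : (0 : V d) ∈ S) (hx : x ∈ Λ) :
    (∑' k : PairsSL S Λ × (SAWPath d × SAWPath d), Mfun lam β S Λ x k) ≤
      ∑' γc : ↥{γ : ↥(PathsIn Λ 0 x) | ∀ i, (γ : SAWPath d).f i ∈ S}ᶜ,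
        pterm lam β ((γc : ↥(PathsIn Λ 0 x)) : SAWPath d) := by
  classical
  have hsupp : Function.support (Mfun lam β S Λ x) ⊆ {k | cndK S Λ x k} := by
    intro k hk
    by_contra hc
    exact hk (by rw [Mfun, dif_neg (fun h : cndK S Λ x k => hc h)])
  rw [← tsum_subtype_eq_of_support_subset hsupp]
  have hnot : ∀ (kk : ↥{k : PairsSL S Λ × (SAWPath d × SAWPath d) | cndK S Λ x k}),
      (⟨glue kk.1.2.1 kk.1.2.2 (adj_of_cnd S Λ x kk.2),
        glue_mem hSΛ kk.2.1 kk.2.2 _⟩ : ↥(PathsIn Λ 0 x)) ∈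
        {γ : ↥(PathsIn Λ 0 x) | ∀ i, (γ : SAWPath d).f i ∈ S}ᶜ := by
    rintro ⟨⟨p, γ₁, γ₂⟩, hk⟩ hall
    have hz : p.1.2 ∉ S := p.2.2.1.2
    have hlt : γ₁.len + 1 < (glue γ₁ γ₂ (adj_of_cnd S Λ x hk)).len + 1 := by
      rw [len_glue]; omega
    have h1 := hall ⟨γ₁.len + 1, hlt⟩
    rw [show (glue γ₁ γ₂ (adj_of_cnd S Λ x hk)).f ⟨γ₁.len + 1, hlt⟩ =
        (glue γ₁ γ₂ (adj_of_cnd S Λ x hk)).eval (γ₁.len + 1) from (eval_lt _ hlt).symm,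
      eval_glue_exit, eval_zero, hk.2.1] at h1
    exact hz h1
  let m2 : ↥{k : PairsSL S Λ × (SAWPath d × SAWPath d) | cndK S Λ x k} →
      ↥({γ : ↥(PathsIn Λ 0 x) | ∀ i, (γ : SAWPath d).f i ∈ S}ᶜ) :=
    fun kk => ⟨⟨glue kk.1.2.1 kk.1.2.2 (adj_of_cnd S Λ x kk.2),
      glue_mem hSΛ kk.2.1 kk.2.2 _⟩, hnot kk⟩
  have hinj : Function.Injective m2 := by
    rintro ⟨⟨pa, γ₁a, γ₂a⟩, ha⟩ ⟨⟨pb, γ₁b, γ₂b⟩, hb⟩ h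
    have ha1 : γ₁a ∈ PathsIn S 0 pa.1.1 := ha.1
    have ha2 : γ₂a ∈ PathsIn Λ pa.1.2 x := ha.2
    have hb1 : γ₁b ∈ PathsIn S 0 pb.1.1 := hb.1
    have hb2 : γ₂b ∈ PathsIn Λ pb.1.2 x := hb.2
    have hglue : glue γ₁a γ₂a (adj_of_cnd S Λ x ha) = glue γ₁b γ₂b (adj_of_cnd S Λ x hb) :=
      congrArg (fun z : ↥({γ : ↥(PathsIn Λ 0 x) | ∀ i, (γ : SAWPath d).f i ∈ S}ᶜ) =>
        ((z : ↥(PathsIn Λ 0 x)) : SAWPath d)) h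
    have hev : ∀ i : ℕ, (glue γ₁a γ₂a (adj_of_cnd S Λ x ha)).eval i =
        (glue γ₁b γ₂b (adj_of_cnd S Λ x hb)).eval i :=
      fun i => congrArg (fun γ : SAWPath d => γ.eval i) hglue
    have hS2a : (glue γ₁a γ₂a (adj_of_cnd S Λ x ha)).eval (γ₁a.len + 1) ∉ S := by
      rw [eval_glue_exit, eval_zero, ha2.1]
      exact pa.2.2.1.2
    have hS2b : (glue γ₁b γ₂b (adj_of_cnd S Λ x hb)).eval (γ₁b.len + 1) ∉ S := by
      rw [eval_glue_exit, eval_zero, hb2.1]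
      exact pb.2.2.1.2
    have hlen : γ₁a.len = γ₁b.len := by
      by_contra hne
      rcases Nat.lt_or_ge γ₁a.len γ₁b.len with hlt | hge
      · refine hS2a ?_
        rw [hev]
        rw [eval_glue_left _ _ _ (by omega)]
        exact (mem_pathsIn_iff.mp hb1).2.2 _ (by omega)
      · refine hS2b ?_
        rw [← hev]
        rw [eval_glue_left _ _ _ (by omega)]
        exact (mem_pathsIn_iff.mp ha1).2.2 _ (by omega)
    obtain ⟨hγ1, hγ2⟩ := glue_inj_of hlen hglue
    subst hγ1
    subst hγ2
    have hp : pa = pb := by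
      refine Subtype.ext (Prod.ext ?_ ?_)
      · rw [← ha1.2.1, ← hb1.2.1]
      · rw [← ha2.1, ← hb2.1]
    subst hp
    rfl
  have hmatch : ∀ kk : ↥{k : PairsSL S Λ × (SAWPath d × SAWPath d) | cndK S Λ x k},
      Mfun lam β S Λ x kk.1 =
        pterm lam β (((m2 kk : ↥(PathsIn Λ 0 x))) : SAWPath d) := by
    intro kk
    rw [Mfun, dif_pos (show cndK S Λ x kk.1 from kk.2)]
  rw [tsum_congr hmatch]
  exact ENNReal.tsum_comp_le_tsum_of_injective hinj
    (fun γc => pterm lam β ((γc : ↥(PathsIn Λ 0 x)) : SAWPath d))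

lemma gfun_pos (u : V d) (p : PairsSL S Λ) (α₁ α₂ δ₁ δ₂ : SAWPath d)
    (h1 : α₁ ∈ PathsIn S 0 u) (h2 : α₂ ∈ PathsIn S u p.1.1)
    (h3 : δ₁ ∈ PathsIn Λ p.1.2 u) (h4 : δ₂ ∈ PathsIn Λ u x) :
    gfun lam β S Λ x (u, p, (α₁, α₂, δ₁, δ₂)) =
      pterm lam β α₁ * pterm lam β α₂ * ENNReal.ofReal β * pterm lam β δ₁ * pterm lam β δ₂ := by
  unfold gfun
  dsimp only
  rw [if_pos ⟨h1, h2, h3, h4⟩]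

/-- the injection from correction data to error-amplitude data -/
def mmap (jj : ↥{j : (PairsSL S Λ × (SAWPath d × SAWPath d)) × ℕ × ℕ | cndR S Λ x j}) :
    V d × PairsSL S Λ × (SAWPath d × SAWPath d × SAWPath d × SAWPath d) :=
  (jj.1.1.2.1.eval jj.1.2.1, jj.1.1.1,
    (jj.1.1.2.1.take jj.1.2.1 (show cndR S Λ x jj.1 from jj.2).2.1,
     jj.1.1.2.1.drop jj.1.2.1 (show cndR S Λ x jj.1 from jj.2).2.1,
     jj.1.1.2.2.take jj.1.2.2 (show cndR S Λ x jj.1 from jj.2).2.2.1,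
     jj.1.1.2.2.drop jj.1.2.2 (show cndR S Λ x jj.1 from jj.2).2.2.1))

lemma L_R :
    (∑' j : (PairsSL S Λ × (SAWPath d × SAWPath d)) × ℕ × ℕ, Rfun lam β S Λ x j) ≤
      ∑' w : V d × PairsSL S Λ × (SAWPath d × SAWPath d × SAWPath d × SAWPath d),
        gfun lam β S Λ x w := by
  classical
  have hsupp : Function.support (Rfun lam β S Λ x) ⊆
      {j : (PairsSL S Λ × (SAWPath d × SAWPath d)) × ℕ × ℕ | cndR S Λ x j} := by
    intro j hj
    by_contra hc
    exact hj (Rfun_ne lam β S Λ x j (fun h => hc h))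
  rw [← tsum_subtype_eq_of_support_subset hsupp]
  have hmatch : ∀ jj : ↥{j : (PairsSL S Λ × (SAWPath d × SAWPath d)) × ℕ × ℕ | cndR S Λ x j},
      Rfun lam β S Λ x jj.1 = gfun lam β S Λ x (mmap S Λ x jj) := by
    rintro ⟨⟨⟨p, γ₁, γ₂⟩, s, t⟩, hj⟩
    have hcnd : cndR S Λ x ((p, γ₁, γ₂), (s, t)) := hj
    have hc1 : γ₁ ∈ PathsIn S 0 p.1.1 := hcnd.1.1
    have hc2 : γ₂ ∈ PathsIn Λ p.1.2 x := hcnd.1.2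
    have hs' : s ≤ γ₁.len := hcnd.2.1
    have ht' : t ≤ γ₂.len := hcnd.2.2.1
    have hcol : γ₁.eval s = γ₂.eval t := hcnd.2.2.2
    rw [Rfun_pos lam β S Λ x p γ₁ γ₂ s t hcnd.1 hs' ht' hcol]
    rw [show mmap S Λ x ⟨((p, γ₁, γ₂), (s, t)), hj⟩ =
      (γ₁.eval s, p, (γ₁.take s hs', γ₁.drop s hs',
        γ₂.take t ht', γ₂.drop t ht')) from rfl]
    have hmem3 : γ₂.take t ht' ∈ PathsIn Λ p.1.2 (γ₁.eval s) := by
      have h' : γ₂.take t ht' ∈ PathsIn Λ p.1.2 (γ₂.eval t) := take_mem hc2 t ht'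
      rwa [← hcol] at h'
    have hmem4 : γ₂.drop t ht' ∈ PathsIn Λ (γ₁.eval s) x := by
      have h' : γ₂.drop t ht' ∈ PathsIn Λ (γ₂.eval t) x := drop_mem hc2 t ht'
      rwa [← hcol] at h'
    rw [gfun_pos lam β S Λ x (γ₁.eval s) p _ _ _ _
      (take_mem hc1 s hs') (drop_mem hc1 s hs') hmem3 hmem4]
  have hinj : Function.Injective (mmap S Λ x) := by
    rintro ⟨⟨⟨pa, γ₁a, γ₂a⟩, sa, ta⟩, hja⟩ ⟨⟨⟨pb, γ₁b, γ₂b⟩, sb, tb⟩, hjb⟩ h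
    have hca : cndR S Λ x ((pa, γ₁a, γ₂a), (sa, ta)) := hja
    have hcb : cndR S Λ x ((pb, γ₁b, γ₂b), (sb, tb)) := hjb
    have hp : pa = pb := congrArg (fun w : V d × PairsSL S Λ ×
      (SAWPath d × SAWPath d × SAWPath d × SAWPath d) => w.2.1) h
    have htk1 : γ₁a.take sa hca.2.1 = γ₁b.take sb hcb.2.1 :=
      congrArg (fun w : V d × PairsSL S Λ ×
        (SAWPath d × SAWPath d × SAWPath d × SAWPath d) => w.2.2.1) h
    have hdr1 : γ₁a.drop sa hca.2.1 = γ₁b.drop sb hcb.2.1 :=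
      congrArg (fun w : V d × PairsSL S Λ ×
        (SAWPath d × SAWPath d × SAWPath d × SAWPath d) => w.2.2.2.1) h
    have htk2 : γ₂a.take ta hca.2.2.1 = γ₂b.take tb hcb.2.2.1 :=
      congrArg (fun w : V d × PairsSL S Λ ×
        (SAWPath d × SAWPath d × SAWPath d × SAWPath d) => w.2.2.2.2.1) h
    have hdr2 : γ₂a.drop ta hca.2.2.1 = γ₂b.drop tb hcb.2.2.1 :=
      congrArg (fun w : V d × PairsSL S Λ ×
        (SAWPath d × SAWPath d × SAWPath d × SAWPath d) => w.2.2.2.2.2) h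
    obtain ⟨hs, hγ1⟩ := take_drop_inj htk1 hdr1
    obtain ⟨ht, hγ2⟩ := take_drop_inj htk2 hdr2
    subst hp
    subst hγ1
    subst hγ2
    subst hs
    subst ht
    rfl
  rw [tsum_congr hmatch]
  exact ENNReal.tsum_comp_le_tsum_of_injective hinj (gfun lam β S Λ x)

lemma L_C :
    (∑' w : V d × PairsSL S Λ × (SAWPath d × SAWPath d × SAWPath d × SAWPath d),
        gfun lam β S Λ x w) =
      ∑' u : S, Efun d lam β S Λ u * G lam β Λ u x := by
  classical
  have hfour : ∀ (u : V d) (p : PairsSL S Λ),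
      G lam β S 0 u * G lam β S u p.1.1 * ENNReal.ofReal β * G lam β Λ p.1.2 u *
          G lam β Λ u x =
        ∑' a : SAWPath d × SAWPath d × SAWPath d × SAWPath d,
          gfun lam β S Λ x (u, p, a) := by
    intro u p
    rw [G_as_tsum lam β S 0 u, G_as_tsum lam β S u p.1.1, G_as_tsum lam β Λ p.1.2 u,
      G_as_tsum lam β Λ u x]
    rw [tsum_mul_tsum', ← ENNReal.tsum_mul_right, tsum_mul_tsum', tsum_mul_tsum']
    rw [← Equiv.tsum_eq (⟨fun q => (q.1.1.1, q.1.1.2, q.1.2, q.2),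
       fun a => (((a.1, a.2.1), a.2.2.1), a.2.2.2), fun _ => rfl, fun _ => rfl⟩ :
        ((SAWPath d × SAWPath d) × SAWPath d) × SAWPath d ≃
          SAWPath d × SAWPath d × SAWPath d × SAWPath d)
      (fun a => gfun lam β S Λ x (u, p, a))]
    refine tsum_congr fun q => ?_
    obtain ⟨⟨⟨α₁, α₂⟩, δ₁⟩, δ₂⟩ := q
    by_cases h1 : α₁ ∈ PathsIn S 0 u <;> by_cases h2 : α₂ ∈ PathsIn S u p.1.1 <;>
      by_cases h3 : δ₁ ∈ PathsIn Λ p.1.2 u <;> by_cases h4 : δ₂ ∈ PathsIn Λ u x <;>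
      simp [gfun, Set.indicator, Equiv.coe_fn_mk, h1, h2, h3, h4]
  have hEG : ∀ u : ↥S, Efun d lam β S Λ u * G lam β Λ u x =
      ∑' pa : PairsSL S Λ × (SAWPath d × SAWPath d × SAWPath d × SAWPath d),
        gfun lam β S Λ x (↑u, pa) := by
    intro u
    rw [show Efun d lam β S Λ u = ∑' p : PairsSL S Λ,
      G lam β S 0 u * G lam β S u p.1.1 * ENNReal.ofReal β * G lam β Λ p.1.2 u from rfl]
    rw [← ENNReal.tsum_mul_right, ENNReal.tsum_prod']
    exact tsum_congr fun p => hfour u p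
  have hvan : ∀ u : V d, u ∉ S →
      ∀ pa : PairsSL S Λ × (SAWPath d × SAWPath d × SAWPath d × SAWPath d),
        gfun lam β S Λ x (u, pa) = 0 := by
    intro u hu pa
    unfold gfun
    rw [if_neg]
    rintro ⟨hm, -, -, -⟩
    have h1 := (mem_pathsIn_iff.mp hm).2.1
    have h2 := (mem_pathsIn_iff.mp hm).2.2 _ (le_refl _)
    rw [h1] at h2
    exact hu h2
  have hsupp : Function.support (fun u : V d =>
      ∑' pa : PairsSL S Λ × (SAWPath d × SAWPath d × SAWPath d × SAWPath d),
        gfun lam β S Λ x (u, pa)) ⊆ S := by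
    intro u hu
    by_contra hc
    refine hu ?_
    simp only []
    rw [tsum_congr (fun pa => hvan u hc pa)]
    exact tsum_zero
  calc (∑' w : V d × PairsSL S Λ × (SAWPath d × SAWPath d × SAWPath d × SAWPath d),
        gfun lam β S Λ x w)
      = ∑' u : V d, ∑' pa : PairsSL S Λ × (SAWPath d × SAWPath d × SAWPath d × SAWPath d),
          gfun lam β S Λ x (u, pa) := ENNReal.tsum_prod'
    _ = ∑' u : S, ∑' pa : PairsSL S Λ × (SAWPath d × SAWPath d × SAWPath d × SAWPath d),
          gfun lam β S Λ x (↑u, pa) := (tsum_subtype_eq_of_support_subset hsupp).symm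
    _ = ∑' u : S, Efun d lam β S Λ u * G lam β Λ u x := tsum_congr fun u => (hEG u).symm

end Main

end Helpers


/-- **Reversed Simon–Lieb bound.** For `d ≥ 2`, `0 < β < β_c`, `0 ∈ S ⊆ Λ ⊆ ℤ^d` and `x ∈ Λ`:
`G_β^Λ(0,x) ≥ G_β^S(0,x) + Σ_{y∈S, z∈Λ∖S, y∼z} G_β^S(0,y) β G_β^Λ(z,x)
  - λ Σ_{u∈S} E_β^{S,Λ}(u) G_β^Λ(u,x)`,
stated with the truncated subtraction of `ℝ≥0∞` (equivalently,
`G^S + Σ ≤ G^Λ + λ Σ_u E(u) G^Λ(u,x)`). -/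
theorem statement5 (d : ℕ) (hd : 2 ≤ d) (lam : ℝ) (hlam0 : 0 ≤ lam) (hlam1 : lam ≤ 1)
    (β : ℝ) (hβ0 : 0 < β) (hβc : β < betaC d lam)
    (S Λ : Set (V d)) (h0S : (0 : V d) ∈ S) (hSΛ : S ⊆ Λ) (x : V d) (hx : x ∈ Λ) :
    G lam β S 0 x +
        (∑' p : {p : V d × V d // p.1 ∈ S ∧ p.2 ∈ Λ \ S ∧ Adj p.1 p.2},
          G lam β S 0 p.1.1 * ENNReal.ofReal β * G lam β Λ p.1.2 x) -
        ENNReal.ofReal lam * ∑' u : S, Efun d lam β S Λ u * G lam β Λ u x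
      ≤ G lam β Λ 0 x := by
  classical
  rw [tsub_le_iff_right]
  have hβ' : 0 ≤ β := le_of_lt hβ0
  have hB2 : (∑' k : PairsSL S Λ × (SAWPath d × SAWPath d), fK lam β S Λ x k) ≤
      (∑' k : PairsSL S Λ × (SAWPath d × SAWPath d), Mfun lam β S Λ x k) +
        ENNReal.ofReal lam *
          ∑' j : (PairsSL S Λ × (SAWPath d × SAWPath d)) × ℕ × ℕ, Rfun lam β S Λ x j := by
    calc (∑' k : PairsSL S Λ × (SAWPath d × SAWPath d), fK lam β S Λ x k)
        ≤ ∑' k : PairsSL S Λ × (SAWPath d × SAWPath d),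
            (Mfun lam β S Λ x k +
              ENNReal.ofReal lam * ∑' st : ℕ × ℕ, Rfun lam β S Λ x (k, st)) :=
          ENNReal.tsum_le_tsum (fun k => L_point lam β S Λ x hlam0 hlam1 hβ' k)
      _ = (∑' k : PairsSL S Λ × (SAWPath d × SAWPath d), Mfun lam β S Λ x k) +
            ∑' k : PairsSL S Λ × (SAWPath d × SAWPath d),
              ENNReal.ofReal lam * ∑' st : ℕ × ℕ, Rfun lam β S Λ x (k, st) :=
          ENNReal.tsum_add
      _ = (∑' k : PairsSL S Λ × (SAWPath d × SAWPath d), Mfun lam β S Λ x k) +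
            ENNReal.ofReal lam * ∑' k : PairsSL S Λ × (SAWPath d × SAWPath d),
              ∑' st : ℕ × ℕ, Rfun lam β S Λ x (k, st) := by
          rw [ENNReal.tsum_mul_left]
      _ = (∑' k : PairsSL S Λ × (SAWPath d × SAWPath d), Mfun lam β S Λ x k) +
            ENNReal.ofReal lam *
              ∑' j : (PairsSL S Λ × (SAWPath d × SAWPath d)) × ℕ × ℕ,
                Rfun lam β S Λ x j := by
          rw [← ENNReal.tsum_prod']
  have hsplitG : (∑' γc : ↥{γ : ↥(PathsIn Λ 0 x) | ∀ i, (γ : SAWPath d).f i ∈ S},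
        pterm lam β ((γc : ↥(PathsIn Λ 0 x)) : SAWPath d)) +
      (∑' γc : ↥({γ : ↥(PathsIn Λ 0 x) | ∀ i, (γ : SAWPath d).f i ∈ S}ᶜ),
        pterm lam β ((γc : ↥(PathsIn Λ 0 x)) : SAWPath d)) = G lam β Λ 0 x := by
    rw [show G lam β Λ 0 x = ∑' γ : PathsIn Λ 0 x, pterm lam β γ.1 from rfl]
    exact Summable.tsum_add_tsum_compl
      (f := fun γ : ↥(PathsIn Λ 0 x) => pterm lam β (γ : SAWPath d))
      (s := {γ : ↥(PathsIn Λ 0 x) | ∀ i, (γ : SAWPath d).f i ∈ S})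
      ENNReal.summable ENNReal.summable
  calc G lam β S 0 x +
        (∑' p : {p : V d × V d // p.1 ∈ S ∧ p.2 ∈ Λ \ S ∧ Adj p.1 p.2},
          G lam β S 0 p.1.1 * ENNReal.ofReal β * G lam β Λ p.1.2 x)
      = G lam β S 0 x + ∑' k : PairsSL S Λ × (SAWPath d × SAWPath d), fK lam β S Λ x k := by
        rw [L_B lam β S Λ x]
    _ ≤ (∑' γc : ↥{γ : ↥(PathsIn Λ 0 x) | ∀ i, (γ : SAWPath d).f i ∈ S},
          pterm lam β ((γc : ↥(PathsIn Λ 0 x)) : SAWPath d)) +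
        ((∑' k : PairsSL S Λ × (SAWPath d × SAWPath d), Mfun lam β S Λ x k) +
          ENNReal.ofReal lam *
            ∑' j : (PairsSL S Λ × (SAWPath d × SAWPath d)) × ℕ × ℕ, Rfun lam β S Λ x j) :=
        add_le_add (L_A lam β S Λ x hSΛ) hB2
    _ ≤ (∑' γc : ↥{γ : ↥(PathsIn Λ 0 x) | ∀ i, (γ : SAWPath d).f i ∈ S},
          pterm lam β ((γc : ↥(PathsIn Λ 0 x)) : SAWPath d)) +
        ((∑' γc : ↥({γ : ↥(PathsIn Λ 0 x) | ∀ i, (γ : SAWPath d).f i ∈ S}ᶜ),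
          pterm lam β ((γc : ↥(PathsIn Λ 0 x)) : SAWPath d)) +
          ENNReal.ofReal lam *
            ∑' w : V d × PairsSL S Λ × (SAWPath d × SAWPath d × SAWPath d × SAWPath d),
              gfun lam β S Λ x w) :=
        add_le_add le_rfl (add_le_add (L_M lam β S Λ x hSΛ h0S hx)
          (mul_le_mul_right (L_R lam β S Λ x) _))
    _ = ((∑' γc : ↥{γ : ↥(PathsIn Λ 0 x) | ∀ i, (γ : SAWPath d).f i ∈ S},
          pterm lam β ((γc : ↥(PathsIn Λ 0 x)) : SAWPath d)) +
        (∑' γc : ↥({γ : ↥(PathsIn Λ 0 x) | ∀ i, (γ : SAWPath d).f i ∈ S}ᶜ),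
          pterm lam β ((γc : ↥(PathsIn Λ 0 x)) : SAWPath d))) +
          ENNReal.ofReal lam *
            ∑' w : V d × PairsSL S Λ × (SAWPath d × SAWPath d × SAWPath d × SAWPath d),
              gfun lam β S Λ x w := by
        rw [add_assoc]
    _ = G lam β Λ 0 x +
          ENNReal.ofReal lam * ∑' u : S, Efun d lam β S Λ u * G lam β Λ u x := by
        rw [hsplitG, L_C lam β S Λ x]
end WSAW
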